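/- Let X be a complete CAT(0) space, f : X → (−∞, ∞] convex, lower semicontinuous and proper, and λ > 0. Then the resolvent J_λ^f(x) = argmin_{z∈X} [f(z) + (1/(2λ))d(x,z)²] satisfies, for every x, y ∈ X: f(J_λ^f(x)) + (1/(2λ))·d(J_λ^f(x), x)² ≤ f(y) + (1/(2λ))·d(x,y)² − (1/(2λ))·d(J_λ^f(x), y)². -/

import Mathlib

open Filter Topology Metric Set

/-- A (chosen) geodesic bicombing witnessing that `X` is a geodesic space:
`geo x y t` is the point at parameter fraction `t ∈ [0,1]` on a geodesic from `x` to `y`. -/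
structure Geodesic (X : Type*) [MetricSpace X] where
  geo : X → X → ℝ → X
  geo_zero : ∀ x y, geo x y 0 = x
  geo_one : ∀ x y, geo x y 1 = y
  geo_dist : ∀ x y : X, ∀ s ∈ Set.Icc (0:ℝ) 1, ∀ t ∈ Set.Icc (0:ℝ) 1,
    dist (geo x y s) (geo x y t) = |s - t| * dist x y

/-- The CN (Bruhat–Tits) inequality characterizing CAT(0) among geodesic spaces. -/
def CAT0 (X : Type*) [MetricSpace X] : Prop :=
  ∀ x y z m : X, dist x m = dist x y / 2 → dist y m = dist x y / 2 →
    dist z m ^ 2 ≤ dist z x ^ 2 / 2 + dist z y ^ 2 / 2 - dist x y ^ 2 / 4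

lemma dyadic_mem (n : ℕ) : ((1/2:ℝ)^n) ∈ Set.Icc (0:ℝ) 1 :=
  ⟨by positivity, pow_le_one₀ (by norm_num) (by norm_num)⟩

lemma dist_sq_dyadic {X : Type*} [MetricSpace X] (G : Geodesic X) (hX : CAT0 X)
    (x p y : X) : ∀ n : ℕ,
    dist x (G.geo p y ((1/2)^n)) ^ 2 ≤
      (1 - (1/2)^n) * dist x p ^ 2 + (1/2:ℝ)^n * dist x y ^ 2
        - (1/2)^n * (1 - (1/2)^n) * dist p y ^ 2 := by
  intro n
  induction n with
  | zero => simp [G.geo_one]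
  | succ n ih =>
    set t : ℝ := (1/2)^n with ht
    have htmem := dyadic_mem n
    have htmem2 := dyadic_mem (n+1)
    have ht2 : (1/2:ℝ)^(n+1) = t/2 := by rw [ht]; ring
    have h0mem : (0:ℝ) ∈ Set.Icc (0:ℝ) 1 := by norm_num
    have hd1 : dist p (G.geo p y (t/2)) = t * dist p y / 2 := by
      have := G.geo_dist p y 0 h0mem (t/2) (by rw [← ht2]; exact htmem2)
      rw [G.geo_zero] at this
      rw [this, abs_of_nonpos (by linarith [htmem.1])]
      ring
    have hd2 : dist (G.geo p y t) (G.geo p y (t/2)) = t * dist p y / 2 := by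
      rw [G.geo_dist p y t htmem (t/2) (by rw [← ht2]; exact htmem2),
        abs_of_nonneg (by linarith [htmem.1])]
      ring
    have hd3 : dist p (G.geo p y t) = t * dist p y := by
      have := G.geo_dist p y 0 h0mem t htmem
      rw [G.geo_zero] at this
      rw [this, abs_of_nonpos (by linarith [htmem.1])]
      ring
    have hCN := hX p (G.geo p y t) x (G.geo p y (t/2))
      (by rw [hd1, hd3]) (by rw [hd2, hd3])
    rw [hd3] at hCN
    rw [ht2]
    have hD : (0:ℝ) ≤ dist p y ^ 2 := sq_nonneg _
    nlinarith [hCN, ih, sq_nonneg (dist p y), htmem.1]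

/-- The resolvent inequality for a convex, lower semicontinuous, proper function on a
complete CAT(0) space: if `J x` minimizes `z ↦ f z + (1/(2λ)) d(x,z)²`, then
`f (J x) + (1/(2λ)) d(J x, x)² ≤ f y + (1/(2λ)) d(x,y)² − (1/(2λ)) d(J x, y)²`. -/
theorem resolvent_inequality {X : Type*} [MetricSpace X] [CompleteSpace X]
    (G : Geodesic X) (hX : CAT0 X)
    (f : X → EReal) (hne_bot : ∀ x, f x ≠ ⊥) (hproper : ∃ x, f x ≠ ⊤)
    (hconv : ∀ x y : X, ∀ t ∈ Set.Icc (0:ℝ) 1,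
      f (G.geo x y t) ≤ ((1 - t : ℝ) : EReal) * f x + ((t : ℝ) : EReal) * f y)
    (hlsc : LowerSemicontinuous f)
    (lam : ℝ) (hlam : 0 < lam)
    (J : X → X)
    (hJ : ∀ x z : X,
      f (J x) + ((1 / (2 * lam) * dist (J x) x ^ 2 : ℝ) : EReal) ≤
        f z + ((1 / (2 * lam) * dist x z ^ 2 : ℝ) : EReal)) :
    ∀ x y : X,
      f (J x) + ((1 / (2 * lam) * dist (J x) x ^ 2 : ℝ) : EReal) ≤
        f y + ((1 / (2 * lam) * dist x y ^ 2 : ℝ) : EReal)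
          - ((1 / (2 * lam) * dist (J x) y ^ 2 : ℝ) : EReal) := by
  intro x y
  set p := J x with hp
  set c : ℝ := 1 / (2 * lam) with hc
  have hcpos : (0:ℝ) < c := by rw [hc]; positivity
  -- f p is finite
  obtain ⟨z0, hz0⟩ := hproper
  have hfp_top : f p ≠ ⊤ := by
    intro h
    have h1 := hJ x z0
    rw [← hp, h, EReal.top_add_coe] at h1
    exact absurd (top_le_iff.mp h1)
      (EReal.add_lt_top hz0 (EReal.coe_ne_top _)).ne
  set fp : ℝ := (f p).toReal with hfp
  have hfpe : ((fp : ℝ) : EReal) = f p := EReal.coe_toReal hfp_top (hne_bot p)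
  by_cases hfy : f y = ⊤
  · rw [hfy, EReal.top_add_coe, EReal.top_sub_coe]
    exact le_top
  set fy : ℝ := (f y).toReal with hfyr
  have hfye : ((fy : ℝ) : EReal) = f y := EReal.coe_toReal hfy (hne_bot y)
  -- the key real inequality for each dyadic t
  have key : ∀ n : ℕ,
      fp + c * dist p x ^ 2 ≤
        fy + c * dist x y ^ 2 - c * (1 - (1/2:ℝ)^n) * dist p y ^ 2 := by
    intro n
    set t : ℝ := (1/2)^n with ht
    have htmem := dyadic_mem n
    have htpos : 0 < t := by positivity
    set z := G.geo p y t with hz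
    have hQ := dist_sq_dyadic G hX x p y n
    rw [← ht, ← hz] at hQ
    have h1 := hJ x z
    rw [← hp] at h1
    have h2 := hconv p y t htmem
    rw [← hz, ← hfpe, ← hfye] at h2
    have h2' : f z ≤ (((1 - t) * fp + t * fy : ℝ) : EReal) := by
      refine h2.trans_eq ?_
      push_cast
      rfl
    have h3 : f p + ((c * dist p x ^ 2 : ℝ) : EReal) ≤
        (((1 - t) * fp + t * fy + c * dist x z ^ 2 : ℝ) : EReal) := by
      refine h1.trans ?_
      calc f z + ((c * dist x z ^ 2 : ℝ) : EReal)
          ≤ (((1 - t) * fp + t * fy : ℝ) : EReal) + ((c * dist x z ^ 2 : ℝ) : EReal) :=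
            add_le_add_left h2' _
        _ = _ := by norm_cast
    rw [← hfpe] at h3
    have h4 : fp + c * dist p x ^ 2 ≤ (1 - t) * fp + t * fy + c * dist x z ^ 2 := by
      have := h3
      rw [show ((fp:ℝ):EReal) + ((c * dist p x ^ 2 : ℝ) : EReal)
          = ((fp + c * dist p x ^ 2 : ℝ) : EReal) by norm_cast] at this
      exact_mod_cast this
    -- combine with hQ and divide by t
    have h5 : fp + c * dist p x ^ 2 ≤
        (1 - t) * fp + t * fy + c * ((1 - t) * dist x p ^ 2 + t * dist x y ^ 2
          - t * (1 - t) * dist p y ^ 2) := by nlinarith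
    have hdsym : dist x p = dist p x := dist_comm x p
    rw [hdsym] at h5
    -- t * (fp + c d(p,x)^2) ≤ t * (fy + c d(x,y)^2 - c(1-t) d(p,y)^2)
    nlinarith [h5, htpos, sq_nonneg (dist p y)]
  -- pass to the limit n → ∞
  have hlim : fp + c * dist p x ^ 2 ≤ fy + c * dist x y ^ 2 - c * dist p y ^ 2 := by
    have htend : Tendsto (fun n : ℕ => fy + c * dist x y ^ 2
        - c * (1 - (1/2:ℝ)^n) * dist p y ^ 2) atTop
        (𝓝 (fy + c * dist x y ^ 2 - c * (1 - 0) * dist p y ^ 2)) := by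
      apply Tendsto.const_sub
      exact (((tendsto_pow_atTop_nhds_zero_of_lt_one (by norm_num) (by norm_num)).const_sub
        1).const_mul c |>.mul_const _)
    simp only [sub_zero, mul_one] at htend
    have := ge_of_tendsto' htend key
    simpa using this
  -- convert back to EReal
  rw [← hfpe, ← hfye]
  calc ((fp : ℝ) : EReal) + ((c * dist p x ^ 2 : ℝ) : EReal)
      = ((fp + c * dist p x ^ 2 : ℝ) : EReal) := by norm_cast
    _ ≤ ((fy + c * dist x y ^ 2 - c * dist p y ^ 2 : ℝ) : EReal) := by exact_mod_cast hlim
    _ = _ := by rw [EReal.coe_sub]; norm_cast
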